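/- Let (Ω, P) be a probability space, x, y : ℕ → Ω → ℝ sequences of measurable functions with each x_j y_k and each y_k integrable, and ρ : ℕ → ℝ with ρ_j > 0. Assume A := ∫_Ω ∑_j ρ_j⁻¹ x_j² dP < ∞ and B := ∫_Ω ∑_k y_k² dP < ∞. For j ∈ ℕ define g_j = ∑_k E[x_j y_k] E[y_k] (the series converges absolutely). Then ∑_j ρ_j⁻¹ g_j² ≤ A B². -/

import Mathlib

open MeasureTheory ENNReal

set_option maxHeartbeats 1000000

private lemma cs_lintegral {α : Type*} [MeasurableSpace α] (μ : Measure α)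
    {f g : α → ℝ≥0∞} (hf : AEMeasurable f μ) (hg : AEMeasurable g μ) :
    (∫⁻ a, f a * g a ∂μ) ^ 2 ≤ (∫⁻ a, f a ^ 2 ∂μ) * (∫⁻ a, g a ^ 2 ∂μ) := by
  have hpq : Real.HolderConjugate 2 2 := Real.HolderConjugate.two_two
  have h := ENNReal.lintegral_mul_le_Lp_mul_Lq μ hpq hf hg
  have hhalf : ∀ z : ℝ≥0∞, (z ^ ((1:ℝ)/2)) ^ (2:ℕ) = z := by
    intro z
    rw [← ENNReal.rpow_natCast (z ^ ((1:ℝ)/2)) 2, ← ENNReal.rpow_mul]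
    norm_num
  have hrw : ∀ h : α → ℝ≥0∞, (∫⁻ a, h a ^ (2:ℝ) ∂μ) = ∫⁻ a, h a ^ (2:ℕ) ∂μ := by
    intro h
    refine lintegral_congr fun a => ?_
    rw [← ENNReal.rpow_natCast (h a) 2]; norm_num
  calc (∫⁻ a, f a * g a ∂μ) ^ 2
      ≤ ((∫⁻ a, f a ^ (2:ℝ) ∂μ) ^ ((1:ℝ)/(2:ℝ)) * (∫⁻ a, g a ^ (2:ℝ) ∂μ) ^ ((1:ℝ)/(2:ℝ))) ^ 2 :=
        pow_le_pow_left₀ zero_le (by simpa [Pi.mul_apply, one_div] using h) 2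
    _ = ((∫⁻ a, f a ^ (2:ℝ) ∂μ) ^ ((1:ℝ)/2)) ^ (2:ℕ) * ((∫⁻ a, g a ^ (2:ℝ) ∂μ) ^ ((1:ℝ)/2)) ^ (2:ℕ) := by
        rw [mul_pow]
    _ = (∫⁻ a, f a ^ (2:ℝ) ∂μ) * (∫⁻ a, g a ^ (2:ℝ) ∂μ) := by rw [hhalf, hhalf]
    _ = (∫⁻ a, f a ^ 2 ∂μ) * (∫⁻ a, g a ^ 2 ∂μ) := by rw [hrw, hrw]

private lemma cs_tsum (u v : ℕ → ℝ≥0∞) :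
    (∑' k, u k * v k) ^ 2 ≤ (∑' k, u k ^ 2) * (∑' k, v k ^ 2) := by
  have h := cs_lintegral (Measure.count : Measure ℕ) (f := u) (g := v)
    measurable_from_top.aemeasurable measurable_from_top.aemeasurable
  simpa [lintegral_count] using h

/-- The bound for term III in the proof of Theorem 1: with
`A = E‖X‖²_{H(K)} = ∫ ∑_j ρ_j⁻¹ x_j² dP < ∞` and `B = E‖Y‖²_{L₂} = ∫ ∑_k y_k² dP < ∞`,
the coefficients `g_j = ∑_k E[x_j y_k] E[y_k]` (the series converging absolutely)
satisfy `∑_j ρ_j⁻¹ g_j² ≤ A B²`. -/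
theorem term_III_bound
    {Ω : Type*} [MeasurableSpace Ω] (P : Measure Ω) [IsProbabilityMeasure P]
    (x y : ℕ → Ω → ℝ)
    (hxm : ∀ j, Measurable (x j)) (hym : ∀ k, Measurable (y k))
    (hxyi : ∀ j k, Integrable (fun ω => x j ω * y k ω) P)
    (hyi : ∀ k, Integrable (y k) P)
    (ρ : ℕ → ℝ) (hρ : ∀ j, 0 < ρ j)
    (A B : ℝ≥0∞)
    (hA : A = ∫⁻ ω, ∑' (j : ℕ), ENNReal.ofReal ((ρ j)⁻¹ * (x j ω) ^ 2) ∂P)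
    (hAfin : A ≠ ⊤)
    (hB : B = ∫⁻ ω, ∑' (k : ℕ), ENNReal.ofReal ((y k ω) ^ 2) ∂P)
    (hBfin : B ≠ ⊤) :
    (∀ j : ℕ, Summable (fun k : ℕ =>
        |(∫ ω, x j ω * y k ω ∂P) * (∫ ω, y k ω ∂P)|))
      ∧ ∑' (j : ℕ),
          ENNReal.ofReal ((ρ j)⁻¹ *
            (∑' k : ℕ, (∫ ω, x j ω * y k ω ∂P) * (∫ ω, y k ω ∂P)) ^ 2)
        ≤ A * B ^ 2 := by
  set a : ℕ → ℕ → ℝ := fun j k => ∫ ω, x j ω * y k ω ∂P with ha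
  set c : ℕ → ℝ := fun k => ∫ ω, y k ω ∂P with hc
  set r : ℕ → ℝ≥0∞ := fun j => ENNReal.ofReal (ρ j)⁻¹ with hr
  set X : ℕ → ℝ≥0∞ := fun j => ∫⁻ ω, ENNReal.ofReal ((x j ω) ^ 2) ∂P with hX
  set Bk : ℕ → ℝ≥0∞ := fun k => ∫⁻ ω, ENNReal.ofReal ((y k ω) ^ 2) ∂P with hBk
  have hρinv : ∀ j, (0:ℝ) ≤ (ρ j)⁻¹ := fun j => (inv_pos.mpr (hρ j)).le
  -- A = ∑ r j * X j
  have hAsum : ∑' j, r j * X j = A := by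
    rw [hA, lintegral_tsum (f := fun j ω => ENNReal.ofReal ((ρ j)⁻¹ * x j ω ^ 2)) (fun j =>
      ((measurable_const.mul ((hxm j).pow_const 2)).ennreal_ofReal).aemeasurable)]
    refine tsum_congr fun j => ?_
    rw [hr, hX]
    rw [← lintegral_const_mul _ ((hxm j).pow_const 2).ennreal_ofReal]
    refine lintegral_congr fun ω => ?_
    rw [← ENNReal.ofReal_mul (hρinv j)]
  have hBsum : ∑' k, Bk k = B := by
    rw [hB, lintegral_tsum (fun k => (((hym k).pow_const 2).ennreal_ofReal).aemeasurable)]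
  -- finiteness
  have hBkfin : ∀ k, Bk k ≠ ⊤ := fun k =>
    ne_top_of_le_ne_top (hBsum ▸ hBfin) (ENNReal.le_tsum k)
  have hXfin : ∀ j, X j ≠ ⊤ := by
    intro j
    intro htop
    have h1 : r j * X j ≤ A := hAsum ▸ ENNReal.le_tsum j
    have hr0 : r j ≠ 0 := by
      simp only [hr, ne_eq, ENNReal.ofReal_eq_zero, not_le]
      exact inv_pos.mpr (hρ j)
    rw [htop, ENNReal.mul_top hr0] at h1
    exact hAfin (top_le_iff.mp h1)
  -- Cauchy-Schwarz over Ω for a j k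
  have hak : ∀ j k, ENNReal.ofReal (a j k ^ 2) ≤ X j * Bk k := by
    intro j k
    have h1 : ENNReal.ofReal (a j k ^ 2) = (ENNReal.ofReal |a j k|) ^ 2 := by
      rw [← sq_abs, ENNReal.ofReal_pow (abs_nonneg _)]
    have h2 : ENNReal.ofReal |a j k|
        ≤ ∫⁻ ω, ENNReal.ofReal |x j ω| * ENNReal.ofReal |y k ω| ∂P := by
      calc ENNReal.ofReal |a j k| ≤ ENNReal.ofReal (∫ ω, |x j ω| * |y k ω| ∂P) := by
            refine ENNReal.ofReal_le_ofReal ?_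
            simpa [Real.norm_eq_abs, abs_mul] using
              norm_integral_le_integral_norm (fun ω => x j ω * y k ω)
        _ = ∫⁻ ω, ENNReal.ofReal (|x j ω| * |y k ω|) ∂P :=
            ofReal_integral_eq_lintegral_ofReal
              (by simpa [abs_mul] using (hxyi j k).abs)
              (Filter.Eventually.of_forall fun ω => mul_nonneg (abs_nonneg _) (abs_nonneg _))
        _ = ∫⁻ ω, ENNReal.ofReal |x j ω| * ENNReal.ofReal |y k ω| ∂P := by
            refine lintegral_congr fun ω => ?_
            rw [ENNReal.ofReal_mul (abs_nonneg _)]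
    have h3 := cs_lintegral P (f := fun ω => ENNReal.ofReal |x j ω|)
      (g := fun ω => ENNReal.ofReal |y k ω|)
      ((hxm j).abs.ennreal_ofReal).aemeasurable ((hym k).abs.ennreal_ofReal).aemeasurable
    have h4 : ∀ (f : Ω → ℝ), (fun ω => (ENNReal.ofReal |f ω|) ^ 2)
        = fun ω => ENNReal.ofReal (f ω ^ 2) := by
      intro f; funext ω; rw [← ENNReal.ofReal_pow (abs_nonneg _), sq_abs]
    rw [h1]
    calc (ENNReal.ofReal |a j k|) ^ 2
        ≤ (∫⁻ ω, ENNReal.ofReal |x j ω| * ENNReal.ofReal |y k ω| ∂P) ^ 2 :=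
          pow_le_pow_left₀ zero_le h2 2
      _ ≤ (∫⁻ ω, (ENNReal.ofReal |x j ω|) ^ 2 ∂P) * (∫⁻ ω, (ENNReal.ofReal |y k ω|) ^ 2 ∂P) := h3
      _ = X j * Bk k := by
          simp only [hX, hBk]
          congr 1 <;> refine lintegral_congr fun ω => ?_ <;>
            rw [← ENNReal.ofReal_pow (abs_nonneg _), sq_abs]
  -- Cauchy-Schwarz over Ω for c k (against constant 1)
  have hck : ∀ k, ENNReal.ofReal (c k ^ 2) ≤ Bk k := by
    intro k
    have h1 : ENNReal.ofReal (c k ^ 2) = (ENNReal.ofReal |c k|) ^ 2 := by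
      rw [← sq_abs, ENNReal.ofReal_pow (abs_nonneg _)]
    have h2 : ENNReal.ofReal |c k| ≤ ∫⁻ ω, ENNReal.ofReal |y k ω| * 1 ∂P := by
      calc ENNReal.ofReal |c k| ≤ ENNReal.ofReal (∫ ω, |y k ω| ∂P) := by
            refine ENNReal.ofReal_le_ofReal ?_
            simpa [Real.norm_eq_abs] using norm_integral_le_integral_norm (y k)
        _ = ∫⁻ ω, ENNReal.ofReal |y k ω| ∂P :=
            ofReal_integral_eq_lintegral_ofReal (hyi k).abs
              (Filter.Eventually.of_forall fun ω => abs_nonneg _)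
        _ = ∫⁻ ω, ENNReal.ofReal |y k ω| * 1 ∂P := by simp
    have h3 := cs_lintegral P (f := fun ω => ENNReal.ofReal |y k ω|)
      (g := fun _ => (1:ℝ≥0∞))
      ((hym k).abs.ennreal_ofReal).aemeasurable aemeasurable_const
    rw [h1]
    calc (ENNReal.ofReal |c k|) ^ 2
        ≤ (∫⁻ ω, ENNReal.ofReal |y k ω| * 1 ∂P) ^ 2 := pow_le_pow_left₀ zero_le h2 2
      _ ≤ (∫⁻ ω, (ENNReal.ofReal |y k ω|) ^ 2 ∂P) * (∫⁻ ω, (1:ℝ≥0∞) ^ 2 ∂P) := h3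
      _ = Bk k * 1 := by
          congr 1
          · exact lintegral_congr fun ω => by rw [← ENNReal.ofReal_pow (abs_nonneg _), sq_abs]
          · simp
      _ = Bk k := mul_one _
  -- summability of the squares
  have hasq : ∀ j, Summable fun k => a j k ^ 2 := by
    intro j
    have hne : ∑' k, ENNReal.ofReal (a j k ^ 2) ≠ ⊤ := by
      refine ne_top_of_le_ne_top (ENNReal.mul_ne_top (hXfin j) hBfin) ?_
      calc ∑' k, ENNReal.ofReal (a j k ^ 2) ≤ ∑' k, X j * Bk k :=
            ENNReal.tsum_le_tsum fun k => hak j k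
        _ = X j * B := by rw [ENNReal.tsum_mul_left, hBsum]
    have := ENNReal.summable_toReal hne
    simpa [ENNReal.toReal_ofReal (sq_nonneg _)] using this
  have hcsq : Summable fun k => c k ^ 2 := by
    have hne : ∑' k, ENNReal.ofReal (c k ^ 2) ≠ ⊤ := by
      refine ne_top_of_le_ne_top hBfin ?_
      calc ∑' k, ENNReal.ofReal (c k ^ 2) ≤ ∑' k, Bk k := ENNReal.tsum_le_tsum hck
        _ = B := hBsum
    have := ENNReal.summable_toReal hne
    simpa [ENNReal.toReal_ofReal (sq_nonneg _)] using this
  have habs : ∀ j, Summable fun k => |a j k * c k| := by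
    intro j
    refine Summable.of_nonneg_of_le (fun k => abs_nonneg _)
      (fun k => ?_) (((hasq j).add hcsq).div_const 2)
    have h := sq_nonneg (|a j k| - |c k|)
    rw [abs_mul]
    nlinarith [abs_nonneg (a j k), abs_nonneg (c k), sq_abs (a j k), sq_abs (c k)]
  refine ⟨habs, ?_⟩
  -- main bound
  have hterm : ∀ j, ENNReal.ofReal ((ρ j)⁻¹ * (∑' k, a j k * c k) ^ 2)
      ≤ r j * X j * B ^ 2 := by
    intro j
    set g : ℝ := ∑' k, a j k * c k with hg
    have h1 : ENNReal.ofReal ((ρ j)⁻¹ * g ^ 2) = r j * (ENNReal.ofReal |g|) ^ 2 := by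
      rw [ENNReal.ofReal_mul (hρinv j), ← sq_abs g, ENNReal.ofReal_pow (abs_nonneg _)]
    have h2 : ENNReal.ofReal |g| ≤ ∑' k, ENNReal.ofReal |a j k| * ENNReal.ofReal |c k| := by
      calc ENNReal.ofReal |g| ≤ ENNReal.ofReal (∑' k, |a j k| * |c k|) := by
            refine ENNReal.ofReal_le_ofReal ?_
            simpa [Real.norm_eq_abs] using
              norm_tsum_le_tsum_norm (f := fun k => a j k * c k)
                (by simpa [Real.norm_eq_abs, abs_mul] using habs j)
        _ = ∑' k, ENNReal.ofReal (|a j k| * |c k|) :=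
            ENNReal.ofReal_tsum_of_nonneg
              (fun k => mul_nonneg (abs_nonneg _) (abs_nonneg _))
              (by simpa [abs_mul] using habs j)
        _ = ∑' k, ENNReal.ofReal |a j k| * ENNReal.ofReal |c k| :=
            tsum_congr fun k => ENNReal.ofReal_mul (abs_nonneg _)
    have h3 := cs_tsum (fun k => ENNReal.ofReal |a j k|) (fun k => ENNReal.ofReal |c k|)
    have h4 : (∑' k, (ENNReal.ofReal |a j k|) ^ 2) ≤ X j * B := by
      calc (∑' k, (ENNReal.ofReal |a j k|) ^ 2) = ∑' k, ENNReal.ofReal (a j k ^ 2) := by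
            refine tsum_congr fun k => ?_
            rw [← ENNReal.ofReal_pow (abs_nonneg _), sq_abs]
        _ ≤ ∑' k, X j * Bk k := ENNReal.tsum_le_tsum fun k => hak j k
        _ = X j * B := by rw [ENNReal.tsum_mul_left, hBsum]
    have h5 : (∑' k, (ENNReal.ofReal |c k|) ^ 2) ≤ B := by
      calc (∑' k, (ENNReal.ofReal |c k|) ^ 2) = ∑' k, ENNReal.ofReal (c k ^ 2) := by
            refine tsum_congr fun k => ?_
            rw [← ENNReal.ofReal_pow (abs_nonneg _), sq_abs]
        _ ≤ ∑' k, Bk k := ENNReal.tsum_le_tsum hck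
        _ = B := hBsum
    calc ENNReal.ofReal ((ρ j)⁻¹ * g ^ 2) = r j * (ENNReal.ofReal |g|) ^ 2 := h1
      _ ≤ r j * (∑' k, ENNReal.ofReal |a j k| * ENNReal.ofReal |c k|) ^ 2 :=
          mul_le_mul_right (pow_le_pow_left₀ zero_le h2 2) _
      _ ≤ r j * ((∑' k, (ENNReal.ofReal |a j k|) ^ 2) * (∑' k, (ENNReal.ofReal |c k|) ^ 2)) :=
          mul_le_mul_right h3 _
      _ ≤ r j * (X j * B * B) := mul_le_mul_right (mul_le_mul' h4 h5) _
      _ = r j * X j * B ^ 2 := by ring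
  calc ∑' j, ENNReal.ofReal ((ρ j)⁻¹ * (∑' k, a j k * c k) ^ 2)
      ≤ ∑' j, r j * X j * B ^ 2 := ENNReal.tsum_le_tsum hterm
    _ = (∑' j, r j * X j) * B ^ 2 := ENNReal.tsum_mul_right
    _ = A * B ^ 2 := by rw [hAsum]
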